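/- In the uniform case, if λ* > 0, then there exist an order-preserving covering placement y with maximum movement λ* and indices i ≤ j such that sensors i, i+1, …, j are in attached positions in y (y_{t+1} = y_t + 2r for i ≤ t ≤ j−1) and one of the following three cases holds: (a) y_j = x_j − λ* and y_i = r; (b) y_i = x_i + λ* and y_j = L − r; (c) i < j, y_i = x_i + λ*, and y_j = x_j − λ*. -/

import Mathlib

/-- Uniform case: placement `y` of sensors `1, …, n`, all with range `r`, covers `[0, L]`. -/
def Covers (n : ℕ) (L r : ℝ) (y : ℕ → ℝ) : Prop :=
  Set.Icc (0 : ℝ) L ⊆ ⋃ i ∈ Set.Icc 1 n, Set.Icc (y i - r) (y i + r)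

/-- The maximum movement `max_{1 ≤ i ≤ n} |x i - y i|` of the placement `y`. -/
noncomputable def MaxMove (n : ℕ) (x y : ℕ → ℝ) : ℝ :=
  sSup ((fun i => |x i - y i|) '' Set.Icc 1 n)

/-- `λ*`: the infimum of the maximum movement over all covering placements. -/
noncomputable def LamStar (n : ℕ) (L r : ℝ) (x : ℕ → ℝ) : ℝ :=
  sInf (MaxMove n x '' {y : ℕ → ℝ | Covers n L r y})

section Basic
variable {n : ℕ} {L r : ℝ} {x y : ℕ → ℝ}

lemma maxmove_mem (hn : 1 ≤ n) : MaxMove n x y ∈ ((fun i => |x i - y i|) '' Set.Icc 1 n) := by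
  apply Set.Nonempty.csSup_mem
  · exact ⟨|x 1 - y 1|, ⟨1, ⟨le_refl 1, hn⟩, rfl⟩⟩
  · exact (Set.finite_Icc 1 n).image _

lemma abs_le_maxmove {t : ℕ} (h1 : 1 ≤ t) (h2 : t ≤ n) : |x t - y t| ≤ MaxMove n x y := by
  apply le_csSup (((Set.finite_Icc 1 n).image _).bddAbove)
  exact ⟨t, ⟨h1, h2⟩, rfl⟩

lemma maxmove_le (hn : 1 ≤ n) {B : ℝ} (h : ∀ t, 1 ≤ t → t ≤ n → |x t - y t| ≤ B) :
    MaxMove n x y ≤ B := by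
  have hne : ((fun i => |x i - y i|) '' Set.Icc 1 n).Nonempty := ⟨|x 1 - y 1|, ⟨1, ⟨le_refl 1, hn⟩, rfl⟩⟩
  apply csSup_le hne
  rintro _ ⟨t, ⟨h1, h2⟩, rfl⟩; exact h t h1 h2

lemma maxmove_nonneg (hn : 1 ≤ n) : 0 ≤ MaxMove n x y :=
  le_trans (abs_nonneg _) (abs_le_maxmove (le_refl 1) hn)

lemma lamstar_le (hn : 1 ≤ n) (hy : Covers n L r y) : LamStar n L r x ≤ MaxMove n x y := by
  apply csInf_le
  · exact ⟨0, by rintro _ ⟨z, _, rfl⟩; exact maxmove_nonneg hn⟩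
  · exact ⟨y, hy, rfl⟩

lemma covers_exists (hn : 1 ≤ n) (hL : 0 < L) (hr : 0 < r) (hcap : L ≤ 2 * n * r) :
    Covers n L r (fun t => (2 * t - 1) * r) := by
  intro p hp
  obtain ⟨hp0, hpL⟩ := hp
  set i : ℕ := max 1 ⌈p / (2 * r)⌉₊ with hi
  have h2r : (0:ℝ) < 2 * r := by linarith
  have hin : i ≤ n := by
    apply max_le hn
    apply Nat.ceil_le.mpr
    rw [div_le_iff₀ h2r]
    calc p ≤ L := hpL
    _ ≤ 2 * n * r := hcap
    _ = n * (2 * r) := by ring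
  have hi1 : 1 ≤ i := le_max_left _ _
  have hup : p ≤ 2 * i * r := by
    have : p / (2*r) ≤ (⌈p / (2 * r)⌉₊ : ℝ) := Nat.le_ceil _
    have h2 : (⌈p / (2 * r)⌉₊ : ℝ) ≤ i := by exact_mod_cast le_max_right _ _
    calc p = p / (2*r) * (2*r) := by field_simp
    _ ≤ (i:ℝ) * (2*r) := by apply mul_le_mul_of_nonneg_right (le_trans this h2) (le_of_lt h2r)
    _ = 2 * i * r := by ring
  have hlo : 2 * ((i:ℝ) - 1) * r ≤ p := by
    rcases eq_or_lt_of_le hi1 with h | h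
    · simp [← h]; linarith
    · have hic : i = ⌈p / (2 * r)⌉₊ := by
        rcases max_cases 1 ⌈p / (2 * r)⌉₊ with ⟨h1, h2⟩ | ⟨h1, h2⟩ <;> omega
      have : ((i - 1 : ℕ) : ℝ) < p / (2 * r) := by
        apply Nat.lt_ceil.mp; omega
      have hc : ((i - 1 : ℕ) : ℝ) = (i:ℝ) - 1 := by
        have : (1:ℕ) ≤ i := hi1; push_cast [Nat.cast_sub this]; ring
      rw [hc] at this
      have h4 : ((i:ℝ) - 1) * (2 * r) < p := (lt_div_iff₀ h2r).mp this
      linarith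
  refine Set.mem_iUnion.mpr ⟨i, Set.mem_iUnion.mpr ⟨⟨hi1, hin⟩, ?_⟩⟩
  constructor
  · calc (2 * (i:ℝ) - 1) * r - r = 2 * ((i:ℝ) - 1) * r := by ring
    _ ≤ p := hlo
  · calc p ≤ 2 * i * r := hup
    _ = (2 * (i:ℝ) - 1) * r + r := by ring

end Basic

def OrdP (n : ℕ) (y : ℕ → ℝ) : Prop := ∀ i j, 1 ≤ i → i ≤ j → j ≤ n → y i ≤ y j

lemma abs_le_maxmove' {n : ℕ} {x y : ℕ → ℝ} {t : ℕ} (h1 : 1 ≤ t) (h2 : t ≤ n) :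
    |x t - y t| ≤ MaxMove n x y := by
  apply le_csSup (((Set.finite_Icc 1 n).image _).bddAbove)
  exact ⟨t, ⟨h1, h2⟩, rfl⟩

section Sorting
variable {n : ℕ} {L r : ℝ} {x y : ℕ → ℝ}

lemma exists_ordered (hn : 1 ≤ n)
    (hsort : ∀ i j, 1 ≤ i → i ≤ j → j ≤ n → x i ≤ x j)
    (hy : Covers n L r y) :
    ∃ z, Covers n L r z ∧ OrdP n z ∧
      ∀ t, 1 ≤ t → t ≤ n → |x t - z t| ≤ MaxMove n x y := by
  classical
  set M := MaxMove n x y with hM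
  set f : Fin n → ℝ := fun a => y (a + 1) with hf
  set σ := Tuple.sort f with hσ
  set g : Fin n → ℝ := f ∘ σ with hg
  have hgm : Monotone g := Tuple.monotone_sort f
  set z : ℕ → ℝ := fun t => if h : 1 ≤ t ∧ t ≤ n then g ⟨t - 1, by omega⟩ else x t with hz
  have hzval : ∀ t (h1 : 1 ≤ t) (h2 : t ≤ n), z t = g ⟨t - 1, by omega⟩ := by
    intro t h1 h2; simp only [hz]; rw [dif_pos ⟨h1, h2⟩]
  have key : ∀ a : Fin n, |x ((a : ℕ) + 1) - f a| ≤ M := by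
    intro a; exact abs_le_maxmove' (by omega) (by have := a.isLt; omega)
  refine ⟨z, ?_, ?_, ?_⟩
  · -- Covers
    intro p hp
    obtain ⟨t, ht, hpt⟩ := Set.mem_iUnion₂.mp (hy hp)
    obtain ⟨ht1, ht2⟩ := ht
    set a : Fin n := ⟨t - 1, by omega⟩ with ha
    have hfa : f a = y t := by
      have ht : t - 1 + 1 = t := by omega
      simp only [hf, ha, ht]
    set b := σ⁻¹ a with hb
    refine Set.mem_iUnion₂.mpr ⟨(b : ℕ) + 1, ⟨by omega, by have := b.isLt; omega⟩, ?_⟩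
    have : z ((b : ℕ) + 1) = g b := by
      rw [hzval _ (by omega) (by omega)]
      congr 1
      all_goals exact Fin.ext (by simp)
    rw [this]
    have : g b = y t := by
      simp only [hg, Function.comp_apply, hb]
      rw [show σ (σ⁻¹ a) = a from σ.apply_symm_apply a]; exact hfa
    rw [this]; exact hpt
  · -- Ord
    intro i j hi hij hj
    rw [hzval _ hi (le_trans hij hj), hzval _ (le_trans hi hij) hj]
    exact hgm (by simp [Fin.mk_le_mk]; omega)
  · -- movement
    intro t ht1 ht2
    set i : Fin n := ⟨t - 1, by omega⟩ with hi
    rw [hzval _ ht1 ht2]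
    have hti : t = (i : ℕ) + 1 := by simp [hi]; omega
    rw [abs_sub_le_iff]
    constructor
    · -- x t - g i ≤ M  i.e.  g i ≥ x t - M
      set T : Finset (Fin n) := Finset.univ.filter (fun a => f a ≤ g i) with hT
      have hsub : (Finset.Iic i).image σ ⊆ T := by
        intro a haim
        obtain ⟨j, hj, rfl⟩ := Finset.mem_image.mp haim
        have : g j ≤ g i := hgm (Finset.mem_Iic.mp hj)
        exact Finset.mem_filter.mpr ⟨Finset.mem_univ _, this⟩
      have hcard : (i : ℕ) + 1 ≤ T.card := by
        have := Finset.card_le_card hsub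
        rwa [Finset.card_image_of_injective _ σ.injective, Fin.card_Iic] at this
      have hex : ∃ a ∈ T, i ≤ a := by
        by_contra hcon
        push_neg at hcon
        have : T ⊆ Finset.Iio i := fun a haT => Finset.mem_Iio.mpr (hcon a haT)
        have := Finset.card_le_card this
        rw [Fin.card_Iio] at this; omega
      obtain ⟨a, haT, hia⟩ := hex
      have h1 : f a ≤ g i := (Finset.mem_filter.mp haT).2
      have h2 : x ((i:ℕ)+1) ≤ x ((a:ℕ)+1) := hsort _ _ (by omega) (by have := Fin.le_def.mp hia; omega) (by have := a.isLt; omega)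
      have h3 := key a
      rw [abs_sub_le_iff] at h3
      show x t - g i ≤ M
      rw [hti]; linarith [h3.1]
    · -- g i - x t ≤ M
      set T : Finset (Fin n) := Finset.univ.filter (fun a => g i ≤ f a) with hT
      have hsub : (Finset.Ici i).image σ ⊆ T := by
        intro a haim
        obtain ⟨j, hj, rfl⟩ := Finset.mem_image.mp haim
        have : g i ≤ g j := hgm (Finset.mem_Ici.mp hj)
        exact Finset.mem_filter.mpr ⟨Finset.mem_univ _, this⟩
      have hcard : n - (i : ℕ) ≤ T.card := by
        have := Finset.card_le_card hsub
        rwa [Finset.card_image_of_injective _ σ.injective, Fin.card_Ici] at this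
      have hex : ∃ a ∈ T, a ≤ i := by
        by_contra hcon
        push_neg at hcon
        have : T ⊆ Finset.Ioi i := fun a haT => Finset.mem_Ioi.mpr (hcon a haT)
        have := Finset.card_le_card this
        rw [Fin.card_Ioi] at this
        have := i.isLt; omega
      obtain ⟨a, haT, hia⟩ := hex
      have h1 : g i ≤ f a := (Finset.mem_filter.mp haT).2
      have h2 : x ((a:ℕ)+1) ≤ x ((i:ℕ)+1) := hsort _ _ (by omega) (by have := Fin.le_def.mp hia; omega) (by have := a.isLt; omega)
      have h3 := key a
      rw [abs_sub_le_iff] at h3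
      show g i - x t ≤ M
      rw [hti]; linarith [h3.2]

end Sorting

open scoped Classical in
noncomputable def gre (x : ℕ → ℝ) (L r lam : ℝ) : ℕ → ℝ × ℝ
  | 0 => (x 1 - lam, 0)
  | (i+1) =>
    let p := gre x L r lam i
    if x (i+1) - lam ≤ p.2 + r ∧ p.2 < L then
      (min (x (i+1) + lam) (p.2 + r),
       min L (max p.2 (min (x (i+1) + lam) (p.2 + r) + r)))
    else (max p.1 (x (i+1)), p.2)

noncomputable def gy (x : ℕ → ℝ) (L r lam : ℝ) (i : ℕ) : ℝ := (gre x L r lam i).1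
noncomputable def gc (x : ℕ → ℝ) (L r lam : ℝ) (i : ℕ) : ℝ := (gre x L r lam i).2

section Greedy
variable {n : ℕ} {L r : ℝ} {x : ℕ → ℝ}

lemma gy_zero (lam : ℝ) : gy x L r lam 0 = x 1 - lam := rfl
lemma gc_zero (lam : ℝ) : gc x L r lam 0 = 0 := rfl

/-- the main-branch condition -/
def MainC (x : ℕ → ℝ) (L r lam : ℝ) (i : ℕ) : Prop :=
  x (i+1) - lam ≤ gc x L r lam i + r ∧ gc x L r lam i < L

lemma gre_succ (lam : ℝ) (i : ℕ) : gre x L r lam (i+1) =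
    (if x (i+1) - lam ≤ (gre x L r lam i).2 + r ∧ (gre x L r lam i).2 < L then
      (min (x (i+1) + lam) ((gre x L r lam i).2 + r),
       min L (max (gre x L r lam i).2 (min (x (i+1) + lam) ((gre x L r lam i).2 + r) + r)))
    else (max (gre x L r lam i).1 (x (i+1)), (gre x L r lam i).2)) := by
  rw [gre]

lemma gy_main {lam : ℝ} {i : ℕ} (h : MainC x L r lam i) :
    gy x L r lam (i+1) = min (x (i+1) + lam) (gc x L r lam i + r) := by
  have h' : x (i+1) - lam ≤ (gre x L r lam i).2 + r ∧ (gre x L r lam i).2 < L := h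
  unfold gy gc; rw [gre_succ, if_pos h']

lemma gc_main {lam : ℝ} {i : ℕ} (h : MainC x L r lam i) :
    gc x L r lam (i+1) = min L (max (gc x L r lam i) (gy x L r lam (i+1) + r)) := by
  have h' : x (i+1) - lam ≤ (gre x L r lam i).2 + r ∧ (gre x L r lam i).2 < L := h
  rw [gy_main h]; unfold gc; rw [gre_succ, if_pos h']

lemma gy_else {lam : ℝ} {i : ℕ} (h : ¬ MainC x L r lam i) :
    gy x L r lam (i+1) = max (gy x L r lam i) (x (i+1)) := by
  have h' : ¬(x (i+1) - lam ≤ (gre x L r lam i).2 + r ∧ (gre x L r lam i).2 < L) := h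
  unfold gy; rw [gre_succ, if_neg h']

lemma gc_else {lam : ℝ} {i : ℕ} (h : ¬ MainC x L r lam i) :
    gc x L r lam (i+1) = gc x L r lam i := by
  have h' : ¬(x (i+1) - lam ≤ (gre x L r lam i).2 + r ∧ (gre x L r lam i).2 < L) := h
  unfold gc; rw [gre_succ, if_neg h']

lemma gc_bounds (hL : 0 < L) (lam : ℝ) : ∀ i, 0 ≤ gc x L r lam i ∧ gc x L r lam i ≤ L := by
  intro i
  induction i with
  | zero => exact ⟨le_refl 0, hL.le⟩
  | succ i ih =>
    by_cases h : MainC x L r lam i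
    · rw [gc_main h]
      refine ⟨le_min hL.le (le_trans ih.1 (le_max_left _ _)), min_le_left _ _⟩
    · rw [gc_else h]; exact ih

lemma gc_mono_succ (hL : 0 < L) (lam : ℝ) (i : ℕ) :
    gc x L r lam i ≤ gc x L r lam (i+1) := by
  by_cases h : MainC x L r lam i
  · rw [gc_main h]
    exact le_min (gc_bounds hL lam i).2 (le_max_left _ _)
  · rw [gc_else h]

lemma gc_mono (hL : 0 < L) (lam : ℝ) {i j : ℕ} (hij : i ≤ j) :
    gc x L r lam i ≤ gc x L r lam j := by
  induction j with
  | zero => simp_all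
  | succ j ih =>
    rcases Nat.lt_or_ge i (j+1) with h | h
    · exact le_trans (ih (by omega)) (gc_mono_succ hL lam j)
    · have : i = j + 1 := by omega
      rw [this]

end Greedy

section props
variable {n : ℕ} {L r : ℝ} {x : ℕ → ℝ}
variable (hn : 1 ≤ n) (hL : 0 < L) (hr : 0 < r)
  (hsort : ∀ i j, 1 ≤ i → i ≤ j → j ≤ n → x i ≤ x j)
  {lam : ℝ} (hlam : 0 ≤ lam)

include hL hr hsort hlam in
lemma gy_moves : ∀ i, 1 ≤ i → i ≤ n → x i - lam ≤ gy x L r lam i ∧ gy x L r lam i ≤ x i + lam := by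
  intro i
  induction i with
  | zero => omega
  | succ i ih =>
    intro _ hin
    by_cases h : MainC x L r lam i
    · rw [gy_main h]
      exact ⟨le_min (by linarith) (by linarith [h.1]), min_le_left _ _⟩
    · rw [gy_else h]
      rcases Nat.eq_zero_or_pos i with h0 | h1
      · subst h0
        rw [gy_zero]
        constructor
        · exact le_max_of_le_right (by linarith)
        · exact max_le (by linarith) (by linarith)
      · obtain ⟨ih1, ih2⟩ := ih h1 (by omega)
        constructor
        · exact le_max_of_le_right (by linarith)
        · exact max_le (by linarith [hsort i (i+1) h1 (by omega) hin]) (by linarith)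

include hL hr hsort hlam in
lemma gy_step : ∀ i, 1 ≤ i → i ≤ n → gy x L r lam (i-1) ≤ gy x L r lam i := by
  intro i h1 h2
  obtain ⟨i, rfl⟩ : ∃ j, i = j + 1 := ⟨i - 1, by omega⟩
  simp only [Nat.add_sub_cancel]
  by_cases h : MainC x L r lam i
  · rcases Nat.eq_zero_or_pos i with h0 | hi1
    · subst h0
      rw [gy_main h, gy_zero]
      exact le_min (by linarith) (by linarith [h.1, gc_zero (x := x) (L := L) (r := r) lam])
    · -- show MainC at i-1 (i ≥ 1), i.e. at index i = (i-1)+1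
      obtain ⟨i, rfl⟩ : ∃ j, i = j + 1 := ⟨i - 1, by omega⟩
      have hmprev : MainC x L r lam i := by
        by_contra hnm
        have hceq : gc x L r lam (i+1) = gc x L r lam i := gc_else hnm
        rcases not_and_or.mp hnm with hA | hB
        · push_neg at hA
          have hx : x (i+1) ≤ x (i+2) := hsort (i+1) (i+2) (by omega) (by omega) h2
          have := h.1
          rw [hceq] at this
          linarith
        · push_neg at hB
          have := h.2
          rw [hceq] at this
          linarith
      rw [gy_main h, gy_main hmprev]
      apply min_le_min
      · have hx : x (i+1) ≤ x (i+2) := hsort (i+1) (i+2) (by omega) (by omega) h2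
        linarith
      · have := gc_mono_succ (x := x) (r := r) hL lam i
        linarith
  · rw [gy_else h]
    exact le_max_left _ _

include hn hL hr hsort hlam in
lemma gy_ord : ∀ i j, 1 ≤ i → i ≤ j → j ≤ n → gy x L r lam i ≤ gy x L r lam j := by
  intro i j hi hij hj
  induction j with
  | zero => omega
  | succ j ih =>
    rcases Nat.lt_or_ge i (j+1) with h | h
    · have h1 := ih (by omega) (by omega)
      have h2 := gy_step hL hr hsort hlam (j+1) (by omega) hj
      simp only [Nat.add_sub_cancel] at h2
      linarith
    · have : i = j + 1 := by omega
      rw [this]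

include hL in
lemma gc_covered : ∀ i, ∀ p : ℝ, 0 ≤ p → p ≤ gc x L r lam i → 0 < gc x L r lam i →
    ∃ t, 1 ≤ t ∧ t ≤ i ∧ gy x L r lam t - r ≤ p ∧ p ≤ gy x L r lam t + r := by
  intro i
  induction i with
  | zero => intro p _ _ hpos; rw [gc_zero] at hpos; linarith
  | succ i ih =>
    intro p hp0 hple hpos
    by_cases h : MainC x L r lam i
    · have hyr : gy x L r lam (i+1) - r ≤ gc x L r lam i := by
        rw [gy_main h]; have := min_le_right (x (i+1) + lam) (gc x L r lam i + r); linarith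
      have hple' : p ≤ min L (max (gc x L r lam i) (gy x L r lam (i+1) + r)) := by
        rw [← gc_main h]; exact hple
      have h2 : p ≤ max (gc x L r lam i) (gy x L r lam (i+1) + r) :=
        le_trans hple' (min_le_right _ _)
      rcases lt_or_ge (gc x L r lam i) p with hgt | hle2
      · refine ⟨i+1, by omega, le_refl _, by linarith, ?_⟩
        rcases le_max_iff.mp h2 with h3 | h3
        · linarith
        · exact h3
      · rcases eq_or_lt_of_le (gc_bounds hL lam i).1 with heq | hpos2
        · have hp : p = 0 := le_antisymm (by linarith [heq.symm ▸ hle2]) hp0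
          refine ⟨i+1, by omega, le_refl _, by rw [hp]; linarith, ?_⟩
          have hpos' : 0 < min L (max (gc x L r lam i) (gy x L r lam (i+1) + r)) := by
            rw [← gc_main h]; exact hpos
          have h4 : 0 < max (gc x L r lam i) (gy x L r lam (i+1) + r) :=
            lt_of_lt_of_le hpos' (min_le_right _ _)
          rw [hp]
          rcases lt_max_iff.mp h4 with h5 | h5
          · linarith
          · linarith
        · obtain ⟨t, ht1, ht2, ht3, ht4⟩ := ih p hp0 hle2 hpos2
          exact ⟨t, ht1, by omega, ht3, ht4⟩
    · rw [gc_else h] at hple hpos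
      obtain ⟨t, ht1, ht2, ht3, ht4⟩ := ih p hp0 hple hpos
      exact ⟨t, ht1, by omega, ht3, ht4⟩

include hL in
lemma covers_gy (hend : gc x L r lam n = L) : Covers n L r (gy x L r lam) := by
  intro p hp
  obtain ⟨hp0, hpL⟩ := hp
  obtain ⟨t, ht1, ht2, ht3, ht4⟩ :=
    gc_covered hL n p hp0 (by rw [hend]; exact hpL) (by rw [hend]; exact hL)
  exact Set.mem_iUnion₂.mpr ⟨t, ⟨ht1, ht2⟩, ht3, ht4⟩

end props

open scoped Classical in
noncomputable def rho (z : ℕ → ℝ) (r : ℝ) : ℕ → ℝ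
  | 0 => 0
  | (i+1) => if z (i+1) - r ≤ rho z r i then max (rho z r i) (z (i+1) + r) else rho z r i

section Dom
variable {n : ℕ} {L r : ℝ} {x z : ℕ → ℝ}

lemma rho_succ (z : ℕ → ℝ) (r : ℝ) (i : ℕ) : rho z r (i+1) =
    if z (i+1) - r ≤ rho z r i then max (rho z r i) (z (i+1) + r) else rho z r i := by
  rw [rho]

lemma rho_mono_succ (i : ℕ) : rho z r i ≤ rho z r (i+1) := by
  rw [rho_succ]
  split
  · exact le_max_left _ _
  · exact le_refl _

lemma rho_nonneg (i : ℕ) : 0 ≤ rho z r i := by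
  induction i with
  | zero => exact le_refl 0
  | succ i ih => exact le_trans ih (rho_mono_succ i)

lemma rho_inv (hord : ∀ i j, 1 ≤ i → i ≤ j → j ≤ n → z i ≤ z j) :
    ∀ i, i ≤ n → ∀ t, 1 ≤ t → t ≤ i →
      z t + r ≤ rho z r i ∨ rho z r i < z t - r := by
  intro i
  induction i with
  | zero => intro _ t h1 h2; omega
  | succ i ih =>
    intro hin t ht1 ht2
    rcases Nat.lt_or_ge t (i+1) with htlt | htge
    · -- t ≤ i
      rcases ih (by omega) t ht1 (by omega) with hA | hB
      · left; exact le_trans hA (rho_mono_succ i)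
      · -- rho i < z t - r
        rw [rho_succ]
        split
        · rename_i hcond
          -- z (i+1) - r ≤ rho i < z t - r, but z t ≤ z (i+1): contradiction? no:
          -- z t ≤ z (i+1) gives z t - r ≤ z (i+1) - r ≤ rho i < z t - r, contra
          have hz : z t ≤ z (i+1) := hord t (i+1) ht1 (by omega) hin
          linarith
        · right; exact hB
    · -- t = i+1
      have : t = i + 1 := by omega
      subst this
      rw [rho_succ]
      split
      · left; exact le_max_right _ _
      · rename_i hcond; right; linarith [not_le.mp hcond]

lemma rho_ge_L (hn : 1 ≤ n) (hL : 0 < L)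
    (hord : ∀ i j, 1 ≤ i → i ≤ j → j ≤ n → z i ≤ z j)
    (hz : Covers n L r z) : L ≤ rho z r n := by
  by_contra hcon
  push_neg at hcon
  classical
  set F := (Finset.Icc 1 n).filter (fun t => rho z r n < z t - r) with hF
  set e : ℝ := if hne : F.Nonempty then min (F.inf' hne (fun t => z t - r - rho z r n)) 1 else 1 with he
  have he0 : 0 < e := by
    rw [he]
    split
    · rename_i hne
      apply lt_min_iff.mpr
      constructor
      · apply (Finset.lt_inf'_iff _).mpr
        intro t htF
        have := (Finset.mem_filter.mp htF).2
        linarith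
      · norm_num
    · norm_num
  have heF : ∀ t, t ∈ F → e ≤ z t - r - rho z r n := by
    intro t htF
    rw [he]
    rw [dif_pos ⟨t, htF⟩]
    exact le_trans (min_le_left _ _) (Finset.inf'_le _ htF)
  set p := min L (rho z r n + e / 2) with hp
  have hpmem : p ∈ Set.Icc (0:ℝ) L := by
    constructor
    · apply le_min hL.le (by linarith [rho_nonneg (z := z) (r := r) n])
    · exact min_le_left _ _
  have hpgt : rho z r n < p := by
    apply lt_min hcon (by linarith)
  obtain ⟨t, ⟨ht1, ht2⟩, htc⟩ := Set.mem_iUnion₂.mp (hz hpmem)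
  obtain ⟨hc1, hc2⟩ := htc
  rcases rho_inv hord n (le_refl n) t ht1 ht2 with hA | hB
  · linarith
  · have htF : t ∈ F := Finset.mem_filter.mpr ⟨Finset.mem_Icc.mpr ⟨ht1, ht2⟩, hB⟩
    have := heF t htF
    have hple : p ≤ rho z r n + e / 2 := min_le_right _ _
    linarith

lemma gc_dominates (hL : 0 < L) {lam : ℝ}
    (hmv : ∀ t, 1 ≤ t → t ≤ n → |z t - x t| ≤ lam) :
    ∀ i, i ≤ n → min L (rho z r i) ≤ gc x L r lam i := by
  intro i
  induction i with
  | zero => intro _; rw [gc_zero, rho]; simp [hL.le]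
  | succ i ih =>
    intro hin
    have ihh := ih (by omega)
    rcases eq_or_lt_of_le (gc_bounds (x := x) (r := r) hL lam i).2 with hdone | hlt
    · -- gc i = L
      have : gc x L r lam i ≤ gc x L r lam (i+1) := gc_mono_succ hL lam i
      calc min L (rho z r (i+1)) ≤ L := min_le_left _ _
      _ = gc x L r lam i := hdone.symm ▸ rfl
      _ ≤ _ := this
    · -- gc i < L, so min L (rho i) = rho i ≤ gc i
      have hri : rho z r i ≤ gc x L r lam i := by
        rcases min_cases L (rho z r i) with ⟨hm, hm2⟩ | ⟨hm, hm2⟩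
        · linarith [ihh, hm ▸ ihh]
        · linarith [hm ▸ ihh]
      rw [rho_succ]
      split
      · rename_i hcond
        -- update case
        have hzt : |z (i+1) - x (i+1)| ≤ lam := hmv (i+1) (by omega) hin
        rw [abs_le] at hzt
        have hmain : MainC x L r lam i := by
          constructor
          · linarith [hzt.2]
          · exact hlt
        have hy : z (i+1) ≤ gy x L r lam (i+1) := by
          rw [gy_main hmain]
          exact le_min (by linarith [hzt.1]) (by linarith)
        rw [gc_main hmain]
        apply min_le_min (le_refl L)
        apply max_le
        · exact le_trans hri (le_max_left _ _)
        · apply le_max_of_le_right; linarith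
      · calc min L (rho z r i) ≤ rho z r i := min_le_right _ _
        _ ≤ gc x L r lam i := hri
        _ ≤ gc x L r lam (i+1) := gc_mono_succ hL lam i

end Dom

section RC
variable {n : ℕ} {L r : ℝ} {x : ℕ → ℝ}

lemma gc_rc (hL : 0 < L) (lam : ℝ) :
    ∀ i, ∀ ε : ℝ, 0 < ε → ∃ δ : ℝ, 0 < δ ∧
      ∀ μ, lam ≤ μ → μ ≤ lam + δ → gc x L r μ i ≤ gc x L r lam i + ε := by
  intro i
  induction i with
  | zero => intro ε hε; exact ⟨1, by norm_num, fun μ _ _ => by rw [gc_zero, gc_zero]; linarith⟩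
  | succ i ih =>
    intro ε hε
    set C := gc x L r lam i with hC
    rcases eq_or_lt_of_le (gc_bounds (x := x) (r := r) hL lam i).2 with hdone | hlt
    · -- C = L
      refine ⟨1, by norm_num, fun μ h1 h2 => ?_⟩
      have h3 := (gc_bounds (x := x) (r := r) hL μ (i+1)).2
      have h4 := gc_mono_succ (x := x) (r := r) hL lam i
      linarith [hdone]
    · by_cases hreach : x (i+1) - lam ≤ C + r
      · -- main case at lam
        have hmain : MainC x L r lam i := ⟨hreach, hlt⟩
        obtain ⟨δ₀, hδ₀, hIH⟩ := ih (ε/2) (by linarith)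
        refine ⟨min δ₀ (ε/2), lt_min hδ₀ (by linarith), fun μ h1 h2 => ?_⟩
        have hgcμ : gc x L r μ i ≤ C + ε/2 :=
          hIH μ h1 (by linarith [min_le_left δ₀ (ε/2), h2])
        have hstep : C ≤ gc x L r lam (i+1) := gc_mono_succ hL lam i
        by_cases hm : MainC x L r μ i
        · rw [gc_main hm, gy_main hm, gc_main hmain, gy_main hmain]
          have hμb : μ ≤ lam + ε/2 := by linarith [min_le_right δ₀ (ε/2), h2]
          have hinner : min (x (i+1) + μ) (gc x L r μ i + r) ≤
              min (x (i+1) + lam) (C + r) + ε/2 := by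
            rw [← min_add_add_right]
            exact min_le_min (by linarith) (by linarith)
          have hmaxb : max (gc x L r μ i) (min (x (i+1) + μ) (gc x L r μ i + r) + r) ≤
              max C (min (x (i+1) + lam) (C + r) + r) + ε/2 := by
            rw [← max_add_add_right]
            exact max_le_max (by linarith) (by linarith)
          calc min L (max (gc x L r μ i) (min (x (i+1) + μ) (gc x L r μ i + r) + r))
              ≤ min (L + ε/2) (max C (min (x (i+1) + lam) (C + r) + r) + ε/2) :=
                min_le_min (by linarith) hmaxb
          _ = min L (max C (min (x (i+1) + lam) (C + r) + r)) + ε/2 := min_add_add_right _ _ _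
          _ ≤ _ + ε := by linarith
        · rw [gc_else hm]
          linarith
      · -- unreachable at lam
        push_neg at hreach
        set gap := x (i+1) - lam - C - r with hgap
        have hgap0 : 0 < gap := by rw [hgap]; linarith
        obtain ⟨δ₀, hδ₀, hIH⟩ := ih (min ε (gap/3)) (lt_min hε (by linarith))
        refine ⟨min δ₀ (gap/3), lt_min hδ₀ (by linarith), fun μ h1 h2 => ?_⟩
        have hgcμ : gc x L r μ i ≤ C + min ε (gap/3) :=
          hIH μ h1 (by linarith [min_le_left δ₀ (gap/3), h2])
        have hm : ¬ MainC x L r μ i := by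
          intro hm
          have := hm.1
          have h3 : min ε (gap/3) ≤ gap/3 := min_le_right _ _
          have h4 : μ ≤ lam + gap/3 := by linarith [min_le_right δ₀ (gap/3), h2]
          linarith
        rw [gc_else hm]
        have hlamelse : gc x L r lam (i+1) = C := gc_else (fun hmm => by linarith [hmm.1])
        rw [hlamelse]
        linarith [min_le_left ε (gap/3)]

end RC

section Opt
variable {n : ℕ} {L r : ℝ} {x : ℕ → ℝ}

lemma exists_opt (hn : 1 ≤ n) (hL : 0 < L) (hr : 0 < r)
    (hsort : ∀ i j, 1 ≤ i → i ≤ j → j ≤ n → x i ≤ x j) (hcap : L ≤ 2 * n * r) :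
    ∃ y, Covers n L r y ∧ OrdP n y ∧
      (∀ t, 1 ≤ t → t ≤ n → |x t - y t| ≤ LamStar n L r x) ∧
      MaxMove n x y = LamStar n L r x := by
  set Λ := LamStar n L r x with hΛ
  have hcov0 : Covers n L r (fun t => (2 * t - 1) * r) := covers_exists hn hL hr hcap
  have hSne : (MaxMove n x '' {y : ℕ → ℝ | Covers n L r y}).Nonempty :=
    ⟨_, ⟨_, hcov0, rfl⟩⟩
  have hΛ0 : 0 ≤ Λ := by
    apply le_csInf hSne
    rintro _ ⟨z, _, rfl⟩; exact maxmove_nonneg hn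
  have hkey : gc x L r Λ n = L := by
    rcases eq_or_lt_of_le (gc_bounds (x := x) (r := r) hL Λ n).2 with h | hlt
    · exact h
    · exfalso
      set ε := (L - gc x L r Λ n) / 2 with hε
      have hε0 : 0 < ε := by rw [hε]; linarith
      obtain ⟨δ, hδ0, hRC⟩ := gc_rc (x := x) (r := r) hL Λ n ε hε0
      obtain ⟨m, ⟨y, hycov, rfl⟩, hmlt⟩ :=
        exists_lt_of_csInf_lt hSne (show sInf (MaxMove n x '' {y : ℕ → ℝ | Covers n L r y}) < Λ + δ from by rw [← LamStar] at *; linarith)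
      obtain ⟨z, hzcov, hzord, hzmv⟩ := exists_ordered hn hsort hycov
      set M := MaxMove n x y with hM
      have hMΛ : Λ ≤ M := lamstar_le hn hycov
      have hzmv' : ∀ t, 1 ≤ t → t ≤ n → |z t - x t| ≤ M := by
        intro t h1 h2; rw [abs_sub_comm]; exact hzmv t h1 h2
      have hrho : L ≤ rho z r n := rho_ge_L (r := r) hn hL hzord hzcov
      have hdom := gc_dominates (x := x) (r := r) hL hzmv' n (le_refl n)
      have hgcM : gc x L r M n = L := by
        have h1 : min L (rho z r n) = L := min_eq_left hrho |>.symm ▸ (min_eq_left hrho)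
        have := hdom
        rw [h1] at this
        exact le_antisymm (gc_bounds hL M n).2 this
      have := hRC M hMΛ (by linarith)
      rw [hgcM] at this
      rw [hε] at this
      linarith
  refine ⟨gy x L r Λ, covers_gy hL hkey, gy_ord hn hL hr hsort hΛ0, ?_, ?_⟩
  · intro t h1 h2
    obtain ⟨ha, hb⟩ := gy_moves hL hr hsort hΛ0 t h1 h2
    rw [abs_sub_le_iff]
    constructor <;> linarith
  · apply le_antisymm
    · apply maxmove_le hn
      intro t h1 h2
      obtain ⟨ha, hb⟩ := gy_moves hL hr hsort hΛ0 t h1 h2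
      rw [abs_sub_le_iff]
      constructor <;> linarith
    · exact lamstar_le hn (covers_gy hL hkey)

end Opt

open scoped Classical in
noncomputable def Ncnt (n : ℕ) (lam : ℝ) (x y : ℕ → ℝ) : ℕ :=
  ((Finset.Icc 1 n).filter (fun t => |x t - y t| = lam)).card

def Good (n : ℕ) (L r lam : ℝ) (x y : ℕ → ℝ) : Prop :=
  Covers n L r y ∧ OrdP n y ∧ ∀ t, 1 ≤ t → t ≤ n → |x t - y t| ≤ lam

section Shift
open scoped Classical
variable {n : ℕ} {L r lam : ℝ} {x y : ℕ → ℝ}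

lemma shift_right (hn : 1 ≤ n) (hL : 0 < L) (hr : 0 < r) (hlam : 0 < lam)
    (hg : Good n L r lam x y) {i k : ℕ} (hi1 : 1 ≤ i) (hik : i ≤ k) (hkn : k ≤ n)
    (hatt : ∀ t, i ≤ t → t < k → y (t+1) = y t + 2*r)
    (hslack : ∀ t, i ≤ t → t ≤ k → y t < x t + lam)
    (hkstr : y k = x k - lam)
    (hkmax : k < n → y k < y (k+1))
    (hleft : (y i < r) ∨ (2 ≤ i ∧ y i < y (i-1) + 2*r) ∨ (2 ≤ i ∧ L ≤ y (i-1) + r)) :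
    ∃ y', Good n L r lam x y' ∧ Ncnt n lam x y' < Ncnt n lam x y := by
  obtain ⟨hyc, hyo, hymv⟩ := hg
  have hne : (Finset.Icc i k).Nonempty := Finset.nonempty_Icc.mpr hik
  set s1 := (Finset.Icc i k).inf' hne (fun t => x t + lam - y t) with hs1
  have hs1pos : 0 < s1 := by
    apply (Finset.lt_inf'_iff _).mpr
    intro t ht
    obtain ⟨h1, h2⟩ := Finset.mem_Icc.mp ht
    linarith [hslack t h1 h2]
  have hs1le : ∀ t, i ≤ t → t ≤ k → s1 ≤ x t + lam - y t := by
    intro t h1 h2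
    exact Finset.inf'_le _ (Finset.mem_Icc.mpr ⟨h1, h2⟩)
  set s2 : ℝ := if k < n then y (k+1) - y k else 1 with hs2
  have hs2pos : 0 < s2 := by
    rw [hs2]; split
    · rename_i h; linarith [hkmax h]
    · norm_num
  have hs2le : k < n → s2 ≤ y (k+1) - y k := by
    intro h; rw [hs2, if_pos h]
  set s3 : ℝ := if y i < r then r - y i
    else if 2 ≤ i ∧ y i < y (i-1) + 2*r then y (i-1) + 2*r - y i else 1 with hs3
  have hs3pos : 0 < s3 := by
    rw [hs3]; split
    · rename_i h; linarith
    · split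
      · rename_i h; linarith [h.2]
      · norm_num
  set e := min (min s1 s2) (min s3 r) / 2 with he
  have he0 : 0 < e := by
    rw [he]
    have := lt_min (lt_min hs1pos hs2pos) (lt_min hs3pos hr)
    linarith
  have hes1 : 2 * e ≤ s1 := by
    rw [he]; have h1 := min_le_left (min s1 s2) (min s3 r)
    have h2 := min_le_left s1 s2; linarith
  have hes2 : 2 * e ≤ s2 := by
    rw [he]; have h1 := min_le_left (min s1 s2) (min s3 r)
    have h2 := min_le_right s1 s2; linarith
  have hes3 : 2 * e ≤ s3 := by
    rw [he]; have h1 := min_le_right (min s1 s2) (min s3 r)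
    have h2 := min_le_left s3 r; linarith
  have her : 2 * e ≤ r := by
    rw [he]; have h1 := min_le_right (min s1 s2) (min s3 r)
    have h2 := min_le_right s3 r; linarith
  set y' : ℕ → ℝ := fun t => if i ≤ t ∧ t ≤ k then y t + e else y t with hy'
  have hy'in : ∀ t, i ≤ t → t ≤ k → y' t = y t + e := by
    intro t h1 h2; rw [hy']; simp only; rw [if_pos ⟨h1, h2⟩]
  have hy'out : ∀ t, ¬(i ≤ t ∧ t ≤ k) → y' t = y t := by
    intro t h; rw [hy']; simp only; rw [if_neg h]
  -- strict movement bound inside block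
  have hmv' : ∀ t, i ≤ t → t ≤ k → |x t - y' t| < lam := by
    intro t h1 h2
    rw [hy'in t h1 h2, abs_sub_lt_iff]
    have hb := abs_le.mp (hymv t (le_trans hi1 h1) (le_trans h2 hkn))
    have := hs1le t h1 h2
    constructor
    · linarith [hb.2]
    · linarith
  refine ⟨y', ⟨?_, ?_, ?_⟩, ?_⟩
  · -- Covers
    intro p hp
    obtain ⟨t, ⟨ht1, ht2⟩, hc1, hc2⟩ := Set.mem_iUnion₂.mp (hyc hp)
    by_cases hblk : i ≤ t ∧ t ≤ k
    · rcases le_or_gt (y t - r + e) p with hp1 | hp1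
      · refine Set.mem_iUnion₂.mpr ⟨t, ⟨ht1, ht2⟩, ?_, ?_⟩
        · rw [hy'in t hblk.1 hblk.2]; linarith
        · rw [hy'in t hblk.1 hblk.2]; linarith
      · rcases lt_or_ge i t with hti | hti
        · -- use t-1 in block
          have ht1k : t - 1 < k := by omega
          have hti1 : i ≤ t - 1 := by omega
          have hattt : y (t-1+1) = y (t-1) + 2*r := hatt (t-1) hti1 ht1k
          have htt : t - 1 + 1 = t := by omega
          rw [htt] at hattt
          refine Set.mem_iUnion₂.mpr ⟨t-1, ⟨by omega, by omega⟩, ?_, ?_⟩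
          · rw [hy'in (t-1) hti1 (by omega)]; linarith
          · rw [hy'in (t-1) hti1 (by omega)]; linarith
        · -- t = i
          have hti' : t = i := by omega
          subst hti'
          by_cases hc1' : y t < r
          · -- y i < r: block covers from ≤ 0
            have : s3 = r - y t := by rw [hs3, if_pos hc1']
            rw [this] at hes3
            refine Set.mem_iUnion₂.mpr ⟨t, ⟨ht1, ht2⟩, ?_, ?_⟩
            · rw [hy'in t hblk.1 hblk.2]
              have := hp.1
              linarith
            · rw [hy'in t hblk.1 hblk.2]; linarith
          · by_cases hc2' : 2 ≤ t ∧ y t < y (t-1) + 2*r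
            · -- overlap with i-1
              have hs3v : s3 = y (t-1) + 2*r - y t := by
                rw [hs3, if_neg hc1', if_pos hc2']
              rw [hs3v] at hes3
              have hyprev : y (t-1) ≤ y t := hyo (t-1) t (by omega) (by omega) (by omega)
              refine Set.mem_iUnion₂.mpr ⟨t-1, ⟨by omega, by omega⟩, ?_, ?_⟩
              · rw [hy'out (t-1) (by omega)]; linarith
              · rw [hy'out (t-1) (by omega)]; linarith
            · -- remaining: L ≤ y (i-1) + r with 2 ≤ i
              have hl : 2 ≤ t ∧ L ≤ y (t-1) + r := by
                rcases hleft with hl | hl | hl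
                · exact absurd hl hc1'
                · exact absurd hl hc2'
                · exact hl
              have hyprev : y (t-1) ≤ y t := hyo (t-1) t (by omega) (by omega) (by omega)
              refine Set.mem_iUnion₂.mpr ⟨t-1, ⟨by omega, by omega⟩, ?_, ?_⟩
              · rw [hy'out (t-1) (by omega)]; linarith
              · rw [hy'out (t-1) (by omega)]; linarith [hp.2, hl.2]
    · refine Set.mem_iUnion₂.mpr ⟨t, ⟨ht1, ht2⟩, ?_, ?_⟩
      · rw [hy'out t hblk]; linarith
      · rw [hy'out t hblk]; linarith
  · -- OrdP
    intro a b ha hab hb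
    by_cases hba : i ≤ a ∧ a ≤ k
    · by_cases hbb : i ≤ b ∧ b ≤ k
      · rw [hy'in a hba.1 hba.2, hy'in b hbb.1 hbb.2]
        linarith [hyo a b ha hab hb]
      · have hbk : k < b := by omega
        have hklt : k < n := by omega
        have h1 : y (k+1) ≤ y b := hyo (k+1) b (by omega) (by omega) hb
        have h2 := hs2le hklt
        have h3 : y a ≤ y k := hyo a k ha hba.2 hkn
        rw [hy'in a hba.1 hba.2, hy'out b (by omega)]
        linarith
    · by_cases hbb : i ≤ b ∧ b ≤ k
      · have hai : a < i := by omega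
        rw [hy'out a hba, hy'in b hbb.1 hbb.2]
        linarith [hyo a b ha hab hb]
      · rw [hy'out a hba, hy'out b hbb]
        exact hyo a b ha hab hb
  · -- moves
    intro t h1 h2
    by_cases hblk : i ≤ t ∧ t ≤ k
    · exact (hmv' t hblk.1 hblk.2).le
    · rw [hy'out t hblk]; exact hymv t h1 h2
  · -- Ncnt decreases
    have hksub : Ncnt n lam x y' ≤ Ncnt n lam x y - 1 := by
      unfold Ncnt
      have hsub : ((Finset.Icc 1 n).filter (fun t => |x t - y' t| = lam)) ⊆
          (((Finset.Icc 1 n).filter (fun t => |x t - y t| = lam)).erase k) := by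
        intro t ht
        obtain ⟨htm, hteq⟩ := Finset.mem_filter.mp ht
        obtain ⟨ht1, ht2⟩ := Finset.mem_Icc.mp htm
        by_cases hblk : i ≤ t ∧ t ≤ k
        · exact absurd hteq (by exact ne_of_lt (hmv' t hblk.1 hblk.2))
        · apply Finset.mem_erase.mpr
          refine ⟨by omega, Finset.mem_filter.mpr ⟨htm, ?_⟩⟩
          rw [← hy'out t hblk]; exact hteq
      have hkm : k ∈ (Finset.Icc 1 n).filter (fun t => |x t - y t| = lam) := by
        apply Finset.mem_filter.mpr
        refine ⟨Finset.mem_Icc.mpr ⟨le_trans hi1 hik, hkn⟩, ?_⟩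
        rw [hkstr]
        have : x k - (x k - lam) = lam := by ring
        rw [this, abs_of_pos hlam]
      calc ((Finset.Icc 1 n).filter (fun t => |x t - y' t| = lam)).card
          ≤ (((Finset.Icc 1 n).filter (fun t => |x t - y t| = lam)).erase k).card :=
            Finset.card_le_card hsub
      _ = ((Finset.Icc 1 n).filter (fun t => |x t - y t| = lam)).card - 1 :=
            Finset.card_erase_of_mem hkm
    have hkpos : 1 ≤ Ncnt n lam x y := by
      unfold Ncnt
      apply Finset.card_pos.mpr
      refine ⟨k, Finset.mem_filter.mpr ⟨Finset.mem_Icc.mpr ⟨le_trans hi1 hik, hkn⟩, ?_⟩⟩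
      rw [hkstr]
      have : x k - (x k - lam) = lam := by ring
      rw [this, abs_of_pos hlam]
    omega

lemma shift_left (hn : 1 ≤ n) (hL : 0 < L) (hr : 0 < r) (hlam : 0 < lam)
    (hg : Good n L r lam x y) {k j : ℕ} (hk1 : 1 ≤ k) (hkj : k ≤ j) (hjn : j ≤ n)
    (hatt : ∀ t, k ≤ t → t < j → y (t+1) = y t + 2*r)
    (hslack : ∀ t, k ≤ t → t ≤ j → x t - lam < y t)
    (hkstr : y k = x k + lam)
    (hkmin : 2 ≤ k → y (k-1) < y k)
    (hright : (L < y j + r) ∨ (j < n ∧ y (j+1) < y j + 2*r) ∨ (y j + r < 0)) :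
    ∃ y', Good n L r lam x y' ∧ Ncnt n lam x y' < Ncnt n lam x y := by
  obtain ⟨hyc, hyo, hymv⟩ := hg
  have hne : (Finset.Icc k j).Nonempty := Finset.nonempty_Icc.mpr hkj
  set s1 := (Finset.Icc k j).inf' hne (fun t => y t - x t + lam) with hs1
  have hs1pos : 0 < s1 := by
    apply (Finset.lt_inf'_iff _).mpr
    intro t ht
    obtain ⟨h1, h2⟩ := Finset.mem_Icc.mp ht
    linarith [hslack t h1 h2]
  have hs1le : ∀ t, k ≤ t → t ≤ j → s1 ≤ y t - x t + lam := by
    intro t h1 h2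
    exact Finset.inf'_le _ (Finset.mem_Icc.mpr ⟨h1, h2⟩)
  set s2 : ℝ := if 2 ≤ k then y k - y (k-1) else 1 with hs2
  have hs2pos : 0 < s2 := by
    rw [hs2]; split
    · rename_i h; linarith [hkmin h]
    · norm_num
  have hs2le : 2 ≤ k → s2 ≤ y k - y (k-1) := by
    intro h; rw [hs2, if_pos h]
  set s3 : ℝ := if L < y j + r then y j + r - L
    else if j < n ∧ y (j+1) < y j + 2*r then y j + 2*r - y (j+1) else 1 with hs3
  have hs3pos : 0 < s3 := by
    rw [hs3]; split
    · rename_i h; linarith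
    · split
      · rename_i h; linarith [h.2]
      · norm_num
  set e := min (min s1 s2) (min s3 r) / 2 with he
  have he0 : 0 < e := by
    rw [he]
    have := lt_min (lt_min hs1pos hs2pos) (lt_min hs3pos hr)
    linarith
  have hes1 : 2 * e ≤ s1 := by
    rw [he]; have h1 := min_le_left (min s1 s2) (min s3 r)
    have h2 := min_le_left s1 s2; linarith
  have hes2 : 2 * e ≤ s2 := by
    rw [he]; have h1 := min_le_left (min s1 s2) (min s3 r)
    have h2 := min_le_right s1 s2; linarith
  have hes3 : 2 * e ≤ s3 := by
    rw [he]; have h1 := min_le_right (min s1 s2) (min s3 r)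
    have h2 := min_le_left s3 r; linarith
  have her : 2 * e ≤ r := by
    rw [he]; have h1 := min_le_right (min s1 s2) (min s3 r)
    have h2 := min_le_right s3 r; linarith
  set y' : ℕ → ℝ := fun t => if k ≤ t ∧ t ≤ j then y t - e else y t with hy'
  have hy'in : ∀ t, k ≤ t → t ≤ j → y' t = y t - e := by
    intro t h1 h2; rw [hy']; simp only; rw [if_pos ⟨h1, h2⟩]
  have hy'out : ∀ t, ¬(k ≤ t ∧ t ≤ j) → y' t = y t := by
    intro t h; rw [hy']; simp only; rw [if_neg h]
  have hmv' : ∀ t, k ≤ t → t ≤ j → |x t - y' t| < lam := by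
    intro t h1 h2
    rw [hy'in t h1 h2, abs_sub_lt_iff]
    have hb := abs_le.mp (hymv t (le_trans hk1 h1) (le_trans h2 hjn))
    have := hs1le t h1 h2
    constructor
    · linarith
    · linarith [hb.1]
  refine ⟨y', ⟨?_, ?_, ?_⟩, ?_⟩
  · -- Covers
    intro p hp
    obtain ⟨t, ⟨ht1, ht2⟩, hc1, hc2⟩ := Set.mem_iUnion₂.mp (hyc hp)
    by_cases hblk : k ≤ t ∧ t ≤ j
    · rcases le_or_gt p (y t + r - e) with hp1 | hp1
      · refine Set.mem_iUnion₂.mpr ⟨t, ⟨ht1, ht2⟩, ?_, ?_⟩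
        · rw [hy'in t hblk.1 hblk.2]; linarith
        · rw [hy'in t hblk.1 hblk.2]; linarith
      · rcases lt_or_ge t j with htj | htj
        · -- use t+1 in block
          have hattt : y (t+1) = y t + 2*r := hatt t hblk.1 htj
          refine Set.mem_iUnion₂.mpr ⟨t+1, ⟨by omega, by omega⟩, ?_, ?_⟩
          · rw [hy'in (t+1) (by omega) (by omega), hattt]; linarith
          · rw [hy'in (t+1) (by omega) (by omega), hattt]; linarith
        · -- t = j
          have htj' : t = j := by omega
          subst htj'
          by_cases hb1 : L < y t + r
          · exfalso
            have : s3 = y t + r - L := by rw [hs3, if_pos hb1]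
            rw [this] at hes3
            linarith [hp.2]
          · by_cases hb2 : t < n ∧ y (t+1) < y t + 2*r
            · have hs3v : s3 = y t + 2*r - y (t+1) := by
                rw [hs3, if_neg hb1, if_pos hb2]
              rw [hs3v] at hes3
              have hynext : y t ≤ y (t+1) := hyo t (t+1) (by omega) (by omega) (by omega)
              refine Set.mem_iUnion₂.mpr ⟨t+1, ⟨by omega, by omega⟩, ?_, ?_⟩
              · rw [hy'out (t+1) (by omega)]; linarith
              · rw [hy'out (t+1) (by omega)]; linarith
            · have hl : y t + r < 0 := by
                rcases hright with hl | hl | hl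
                · exact absurd hl hb1
                · exact absurd hl hb2
                · exact hl
              exfalso
              linarith [hp.1]
    · refine Set.mem_iUnion₂.mpr ⟨t, ⟨ht1, ht2⟩, ?_, ?_⟩
      · rw [hy'out t hblk]; linarith
      · rw [hy'out t hblk]; linarith
  · -- OrdP
    intro a b ha hab hb
    by_cases hba : k ≤ a ∧ a ≤ j
    · by_cases hbb : k ≤ b ∧ b ≤ j
      · rw [hy'in a hba.1 hba.2, hy'in b hbb.1 hbb.2]
        linarith [hyo a b ha hab hb]
      · rw [hy'in a hba.1 hba.2, hy'out b hbb]
        linarith [hyo a b ha hab hb]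
    · by_cases hbb : k ≤ b ∧ b ≤ j
      · have hak : a < k := by omega
        have hk2 : 2 ≤ k := by omega
        have h1 : y a ≤ y (k-1) := hyo a (k-1) ha (by omega) (by omega)
        have h2 := hs2le hk2
        have h3 : y k ≤ y b := hyo k b hk1 hbb.1 hb
        rw [hy'out a hba, hy'in b hbb.1 hbb.2]
        linarith
      · rw [hy'out a hba, hy'out b hbb]
        exact hyo a b ha hab hb
  · -- moves
    intro t h1 h2
    by_cases hblk : k ≤ t ∧ t ≤ j
    · exact (hmv' t hblk.1 hblk.2).le
    · rw [hy'out t hblk]; exact hymv t h1 h2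
  · -- Ncnt decreases
    have hkm : k ∈ (Finset.Icc 1 n).filter (fun t => |x t - y t| = lam) := by
      apply Finset.mem_filter.mpr
      refine ⟨Finset.mem_Icc.mpr ⟨hk1, le_trans hkj hjn⟩, ?_⟩
      rw [hkstr]
      have : x k - (x k + lam) = -lam := by ring
      rw [this, abs_neg, abs_of_pos hlam]
    have hksub : Ncnt n lam x y' ≤ Ncnt n lam x y - 1 := by
      unfold Ncnt
      have hsub : ((Finset.Icc 1 n).filter (fun t => |x t - y' t| = lam)) ⊆
          (((Finset.Icc 1 n).filter (fun t => |x t - y t| = lam)).erase k) := by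
        intro t ht
        obtain ⟨htm, hteq⟩ := Finset.mem_filter.mp ht
        obtain ⟨ht1, ht2⟩ := Finset.mem_Icc.mp htm
        by_cases hblk : k ≤ t ∧ t ≤ j
        · exact absurd hteq (by exact ne_of_lt (hmv' t hblk.1 hblk.2))
        · apply Finset.mem_erase.mpr
          refine ⟨by omega, Finset.mem_filter.mpr ⟨htm, ?_⟩⟩
          rw [← hy'out t hblk]; exact hteq
      calc ((Finset.Icc 1 n).filter (fun t => |x t - y' t| = lam)).card
          ≤ (((Finset.Icc 1 n).filter (fun t => |x t - y t| = lam)).erase k).card :=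
            Finset.card_le_card hsub
      _ = ((Finset.Icc 1 n).filter (fun t => |x t - y t| = lam)).card - 1 :=
            Finset.card_erase_of_mem hkm
    have hkpos : 1 ≤ Ncnt n lam x y := by
      unfold Ncnt
      exact Finset.card_pos.mpr ⟨k, hkm⟩
    omega

end Shift

section Struct
variable {n : ℕ} {L r : ℝ} {x y : ℕ → ℝ}

lemma left_barrier (hn : 1 ≤ n) (hL : 0 < L) (hyc : Covers n L r y) (hyo : OrdP n y) :
    y 1 ≤ r := by
  obtain ⟨t, ⟨ht1, ht2⟩, hc1, hc2⟩ := Set.mem_iUnion₂.mp (hyc ⟨le_refl 0, hL.le⟩)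
  have := hyo 1 t (le_refl 1) ht1 ht2
  linarith

lemma right_barrier (hn : 1 ≤ n) (hL : 0 < L) (hyc : Covers n L r y) (hyo : OrdP n y) :
    L ≤ y n + r := by
  obtain ⟨t, ⟨ht1, ht2⟩, hc1, hc2⟩ := Set.mem_iUnion₂.mp (hyc ⟨hL.le, le_refl L⟩)
  have := hyo t n ht1 ht2 (le_refl n)
  linarith

lemma gap_lemma (hn : 1 ≤ n) (hL : 0 < L) (hyc : Covers n L r y) (hyo : OrdP n y)
    {i : ℕ} (h2 : 2 ≤ i) (hin : i ≤ n) (hgap : y (i-1) + 2*r < y i) :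
    y i ≤ r ∨ L ≤ y (i-1) + r := by
  by_contra hcon
  push_neg at hcon
  obtain ⟨hri, hLi⟩ := hcon
  set a := max (y (i-1) + r) 0 with ha
  set b := min (y i - r) L with hb
  have hab : a < b := by
    apply max_lt
    · exact lt_min (by linarith) hLi
    · exact lt_min (by linarith) hL
  set q := (a + b) / 2 with hq
  have hqa : a < q := by rw [hq]; linarith
  have hqb : q < b := by rw [hq]; linarith
  have hq0 : 0 ≤ q := le_trans (le_max_right _ _) hqa.le
  have hqL : q ≤ L := le_trans hqb.le (min_le_right _ _)
  obtain ⟨t, ⟨ht1, ht2⟩, hc1, hc2⟩ := Set.mem_iUnion₂.mp (hyc ⟨hq0, hqL⟩)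
  rcases le_or_gt t (i-1) with hti | hti
  · have hyt : y t ≤ y (i-1) := hyo t (i-1) ht1 hti (by omega)
    have : q ≤ a := le_trans (by linarith) (le_max_left (y (i-1) + r) 0)
    linarith
  · have hyt : y i ≤ y t := hyo i t (by omega) (by omega) ht2
    have : b ≤ q := le_trans (min_le_left (y i - r) L) (by linarith)
    linarith

end Struct


/-- Uniform case: if `λ* > 0`, then there is an order-preserving optimal covering placement
`y` and indices `i ≤ j` such that sensors `i, …, j` are in attached positions
(`y (t+1) = y t + 2r` for `i ≤ t < j`) and one of three cases holds:
(a) `y j = x j - λ*` and `y i = r`; (b) `y i = x i + λ*` and `y j = L - r`;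
(c) `i < j`, `y i = x i + λ*` and `y j = x j - λ*`. -/
theorem stmt6 (n : ℕ) (hn : 1 ≤ n) (L r : ℝ) (hL : 0 < L) (hr : 0 < r)
    (x : ℕ → ℝ) (hsort : ∀ i j, 1 ≤ i → i ≤ j → j ≤ n → x i ≤ x j)
    (hcap : L ≤ 2 * n * r)
    (hlam : 0 < LamStar n L r x) :
    ∃ y : ℕ → ℝ, Covers n L r y ∧
      (∀ i j, 1 ≤ i → i ≤ j → j ≤ n → y i ≤ y j) ∧
      MaxMove n x y = LamStar n L r x ∧
      ∃ i j, 1 ≤ i ∧ i ≤ j ∧ j ≤ n ∧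
        (∀ t, i ≤ t → t < j → y (t + 1) = y t + 2 * r) ∧
        ((y j = x j - LamStar n L r x ∧ y i = r) ∨
         (y i = x i + LamStar n L r x ∧ y j = L - r) ∨
         (i < j ∧ y i = x i + LamStar n L r x ∧ y j = x j - LamStar n L r x)) := by
  classical
  set Λ := LamStar n L r x with hΛdef
  obtain ⟨y₀, hy₀c, hy₀o, hy₀m, hy₀M⟩ := exists_opt hn hL hr hsort hcap
  have hg₀ : Good n L r Λ x y₀ := ⟨hy₀c, hy₀o, hy₀m⟩
  have hNSne : {m : ℕ | ∃ y, Good n L r Λ x y ∧ Ncnt n Λ x y = m}.Nonempty :=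
    ⟨_, y₀, hg₀, rfl⟩
  obtain ⟨y, hgy, hNy⟩ := Nat.sInf_mem hNSne
  have hmin : ∀ y', Good n L r Λ x y' → Ncnt n Λ x y ≤ Ncnt n Λ x y' := by
    intro y' hg'
    rw [hNy]
    exact Nat.sInf_le ⟨y', hg', rfl⟩
  obtain ⟨hyc, hyo, hymv⟩ := hgy
  have hgood : Good n L r Λ x y := ⟨hyc, hyo, hymv⟩
  have hMM : MaxMove n x y = Λ := by
    apply le_antisymm
    · exact maxmove_le hn hymv
    · exact lamstar_le hn hyc
  have hstr : ∃ t, 1 ≤ t ∧ t ≤ n ∧ |x t - y t| = Λ := by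
    obtain ⟨t, ⟨h1, h2⟩, heq⟩ := maxmove_mem (x := x) (y := y) hn
    exact ⟨t, h1, h2, by simpa using heq.trans hMM⟩
  refine ⟨y, hyc, hyo, hMM, ?_⟩
  by_cases hLS : ∃ kk, 1 ≤ kk ∧ kk ≤ n ∧ y kk = x kk - Λ
  · -- Case 1: a left-stretched sensor exists
    set K := (Finset.Icc 1 n).filter (fun t => y t = x t - Λ) with hK
    have hKne : K.Nonempty := by
      obtain ⟨kk, h1, h2, h3⟩ := hLS
      exact ⟨kk, Finset.mem_filter.mpr ⟨Finset.mem_Icc.mpr ⟨h1, h2⟩, h3⟩⟩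
    set k := K.max' hKne with hk
    have hkK : k ∈ K := K.max'_mem hKne
    obtain ⟨hkm, hkstr⟩ := Finset.mem_filter.mp hkK
    obtain ⟨hk1, hkn⟩ := Finset.mem_Icc.mp hkm
    have hkmax : ∀ t ∈ K, t ≤ k := fun t ht => Finset.le_max' _ _ ht
    have hAne : k ∈ {a : ℕ | 1 ≤ a ∧ a ≤ k ∧ ∀ t, a ≤ t → t < k → y (t+1) = y t + 2*r} :=
      ⟨hk1, le_refl k, fun t ht1 ht2 => by omega⟩
    set i := sInf {a : ℕ | 1 ≤ a ∧ a ≤ k ∧ ∀ t, a ≤ t → t < k → y (t+1) = y t + 2*r} with hi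
    obtain ⟨hi1, hik, hiatt⟩ := Nat.sInf_mem ⟨k, hAne⟩
    by_cases hcx : ∃ t, i ≤ t ∧ t < k ∧ y t = x t + Λ
    · obtain ⟨t₀, ht1, ht2, ht3⟩ := hcx
      exact ⟨t₀, k, by omega, by omega, hkn,
        fun t hta htb => hiatt t (by omega) htb,
        Or.inr (Or.inr ⟨ht2, ht3, hkstr⟩)⟩
    by_cases hai : y i = r
    · exact ⟨i, k, hi1, hik, hkn, hiatt, Or.inl ⟨hkstr, hai⟩⟩
    exfalso
    have hslack : ∀ t, i ≤ t → t ≤ k → y t < x t + Λ := by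
      intro t h1 h2
      have hle : y t ≤ x t + Λ := by
        have := abs_le.mp (hymv t (by omega) (by omega))
        linarith [this.1]
      rcases eq_or_lt_of_le hle with heq | hlt
      · exfalso
        rcases eq_or_lt_of_le h2 with hek | hek
        · rw [hek, hkstr] at heq
          linarith
        · exact hcx ⟨t, h1, hek, heq⟩
      · exact hlt
    have hkmax' : k < n → y k < y (k+1) := by
      intro hkn'
      have hle : y k ≤ y (k+1) := hyo k (k+1) (by omega) (by omega) (by omega)
      rcases eq_or_lt_of_le hle with heq | hlt
      · exfalso
        have hxk : x k ≤ x (k+1) := hsort k (k+1) hk1 (by omega) (by omega)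
        have hb := abs_le.mp (hymv (k+1) (by omega) (by omega))
        have hynew : y (k+1) = x (k+1) - Λ := by
          have h1 : x (k+1) - Λ ≤ y (k+1) := by linarith [hb.2]
          have h2 : y (k+1) = x k - Λ := by rw [← heq, hkstr]
          linarith
        have : k + 1 ∈ K :=
          Finset.mem_filter.mpr ⟨Finset.mem_Icc.mpr ⟨by omega, by omega⟩, hynew⟩
        have := hkmax _ this
        omega
      · exact hlt
    have hleft : (y i < r) ∨ (2 ≤ i ∧ y i < y (i-1) + 2*r) ∨ (2 ≤ i ∧ L ≤ y (i-1) + r) := by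
      rcases Nat.lt_or_ge i 2 with hi2 | hi2
      · have hieq : i = 1 := by omega
        left
        rw [hieq]
        have hlb := left_barrier hn hL hyc hyo (r := r)
        have hne : y 1 ≠ r := by rw [← hieq]; exact hai
        exact lt_of_le_of_ne hlb hne
      · have hbreak : y i ≠ y (i-1) + 2*r := by
          intro heq
          have hmem : i - 1 ∈ {a : ℕ | 1 ≤ a ∧ a ≤ k ∧ ∀ t, a ≤ t → t < k → y (t+1) = y t + 2*r} := by
            refine ⟨by omega, by omega, fun t ht1 ht2 => ?_⟩
            rcases Nat.lt_or_ge t i with hti | hti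
            · have : t = i - 1 := by omega
              rw [this]
              have : i - 1 + 1 = i := by omega
              rw [this]
              exact heq
            · exact hiatt t hti ht2
          have := Nat.sInf_le hmem
          rw [← hi] at this
          omega
        rcases lt_trichotomy (y i) (y (i-1) + 2*r) with h | h | h
        · exact Or.inr (Or.inl ⟨hi2, h⟩)
        · exact absurd h hbreak
        · rcases gap_lemma hn hL hyc hyo hi2 (by omega) h with h' | h'
          · left
            rcases eq_or_lt_of_le h' with h'' | h''
            · exact absurd h'' hai
            · exact h''
          · exact Or.inr (Or.inr ⟨hi2, h'⟩)
    obtain ⟨y', hg', hlt⟩ :=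
      shift_right hn hL hr hlam hgood hi1 hik hkn hiatt hslack hkstr hkmax' hleft
    have := hmin y' hg'
    omega
  · -- Case 2: no left-stretched sensor
    push_neg at hLS
    have hstr' : ∃ t, 1 ≤ t ∧ t ≤ n ∧ y t = x t + Λ := by
      obtain ⟨t, h1, h2, h3⟩ := hstr
      rcases abs_eq (le_of_lt hlam) |>.mp h3 with h | h
      · exact absurd (by linarith : y t = x t - Λ) (hLS t h1 h2)
      · exact ⟨t, h1, h2, by linarith⟩
    set K := (Finset.Icc 1 n).filter (fun t => y t = x t + Λ) with hK
    have hKne : K.Nonempty := by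
      obtain ⟨kk, h1, h2, h3⟩ := hstr'
      exact ⟨kk, Finset.mem_filter.mpr ⟨Finset.mem_Icc.mpr ⟨h1, h2⟩, h3⟩⟩
    set k := K.min' hKne with hk
    have hkK : k ∈ K := K.min'_mem hKne
    obtain ⟨hkm, hkstr⟩ := Finset.mem_filter.mp hkK
    obtain ⟨hk1, hkn⟩ := Finset.mem_Icc.mp hkm
    have hkmin : ∀ t ∈ K, k ≤ t := fun t ht => Finset.min'_le _ _ ht
    set A := (Finset.Icc k n).filter
      (fun b => ∀ t, k ≤ t → t < b → y (t+1) = y t + 2*r) with hA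
    have hAne : A.Nonempty :=
      ⟨k, Finset.mem_filter.mpr ⟨Finset.mem_Icc.mpr ⟨le_refl k, hkn⟩,
        fun t ht1 ht2 => by omega⟩⟩
    set j := A.max' hAne with hj
    have hjA : j ∈ A := A.max'_mem hAne
    obtain ⟨hjm, hjatt⟩ := Finset.mem_filter.mp hjA
    obtain ⟨hkj, hjn⟩ := Finset.mem_Icc.mp hjm
    have hjmax : ∀ b ∈ A, b ≤ j := fun b hb => Finset.le_max' _ _ hb
    by_cases hbj : y j = L - r
    · exact ⟨k, j, hk1, hkj, hjn, hjatt, Or.inr (Or.inl ⟨hkstr, hbj⟩)⟩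
    exfalso
    have hslack : ∀ t, k ≤ t → t ≤ j → x t - Λ < y t := by
      intro t h1 h2
      have hle : x t - Λ ≤ y t := by
        have := abs_le.mp (hymv t (by omega) (by omega))
        linarith [this.2]
      rcases eq_or_lt_of_le hle with heq | hlt
      · exact absurd heq.symm (hLS t (by omega) (by omega))
      · exact hlt
    have hkmin' : 2 ≤ k → y (k-1) < y k := by
      intro hk2
      have hle : y (k-1) ≤ y k := hyo (k-1) k (by omega) (by omega) (by omega)
      rcases eq_or_lt_of_le hle with heq | hlt
      · exfalso
        have hxk : x (k-1) ≤ x k := hsort (k-1) k (by omega) (by omega) (by omega)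
        have hb := abs_le.mp (hymv (k-1) (by omega) (by omega))
        have hynew : y (k-1) = x (k-1) + Λ := by
          have h1 : y (k-1) ≤ x (k-1) + Λ := by linarith [hb.1]
          have h2 : y (k-1) = x k + Λ := by rw [heq, hkstr]
          linarith
        have : k - 1 ∈ K :=
          Finset.mem_filter.mpr ⟨Finset.mem_Icc.mpr ⟨by omega, by omega⟩, hynew⟩
        have := hkmin _ this
        omega
      · exact hlt
    have hright : (L < y j + r) ∨ (j < n ∧ y (j+1) < y j + 2*r) ∨ (y j + r < 0) := by
      rcases eq_or_lt_of_le hjn with hjn' | hjn'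
      · left
        have := right_barrier hn hL hyc hyo
        rw [← hjn'] at this
        rcases eq_or_lt_of_le this with h | h
        · exfalso; exact hbj (by linarith)
        · exact h
      · have hbreak : y (j+1) ≠ y j + 2*r := by
          intro heq
          have hmem : j + 1 ∈ A := by
            refine Finset.mem_filter.mpr ⟨Finset.mem_Icc.mpr ⟨by omega, by omega⟩,
              fun t ht1 ht2 => ?_⟩
            rcases Nat.lt_or_ge t j with htj | htj
            · exact hjatt t ht1 htj
            · have : t = j := by omega
              rw [this]; exact heq
          have := hjmax _ hmem
          omega
        rcases lt_trichotomy (y (j+1)) (y j + 2*r) with h | h | h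
        · exact Or.inr (Or.inl ⟨by omega, h⟩)
        · exact absurd h hbreak
        · have hgap : y ((j+1)-1) + 2*r < y (j+1) := by
            have : j + 1 - 1 = j := by omega
            rw [this]; exact h
          rcases gap_lemma hn hL hyc hyo (by omega) (by omega) hgap with h' | h'
          · right; right
            linarith
          · left
            have : j + 1 - 1 = j := by omega
            rw [this] at h'
            rcases eq_or_lt_of_le h' with h'' | h''
            · exfalso; exact hbj (by linarith)
            · exact h''
    obtain ⟨y', hg', hlt⟩ :=
      shift_left hn hL hr hlam hgood hk1 hkj hjn hjatt hslack hkstr hkmin' hright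
    have := hmin y' hg'
    omega
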